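/- Let R = S ⊗ P be a tensor product of graded rings where P is a polynomial ring over a field (with generators of positive degree) and S is a nonnegatively graded ring with S⁰ a field. If e ∈ R has the form e = p ⊗ 1 + (terms of positive degree in S), where p ∈ P is a nonzero homogeneous polynomial, and moreover e is homogeneous of the same total degree as p, then e is not a zero divisor in R. -/

import Mathlib

open TensorProduct

section Aux

variable {K : Type*} [Field K] {S : Type*} [CommRing S] [Algebra K S]
  (A : ℕ → Submodule K S) [GradedAlgebra A]

/-- The `K`-linear projection of `S` onto its degree-`i` component. -/
noncomputable def eulerProj (i : ℕ) : S →ₗ[K] S :=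
  (A i).subtype ∘ₗ DirectSum.component K ℕ (fun j => ↥(A j)) i ∘ₗ
    (DirectSum.decomposeLinearEquiv A).toLinearMap

lemma eulerProj_apply (i : ℕ) (s : S) :
    eulerProj A i s = (DirectSum.decompose A s i : S) := rfl

lemma eulerProj_of_mem_same {i : ℕ} {s : S} (hs : s ∈ A i) : eulerProj A i s = s := by
  rw [eulerProj_apply, DirectSum.decompose_of_mem_same A hs]

lemma eulerProj_of_mem_ne {i j : ℕ} {s : S} (hs : s ∈ A j) (h : j ≠ i) :
    eulerProj A i s = 0 := by
  rw [eulerProj_apply, DirectSum.decompose_of_mem_ne A hs h]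

lemma eulerProj_mul_le {m i : ℕ} (him : i ≤ m) {s : S} (hs : s ∈ A i) (t : S) :
    eulerProj A m (s * t) = s * eulerProj A (m - i) t := by
  induction t using DirectSum.Decomposition.inductionOn A with
  | zero => simp
  | add a b ha hb => rw [mul_add, map_add, map_add, mul_add, ha, hb]
  | @homogeneous j t =>
    have hst : s * (t : S) ∈ A (i + j) := SetLike.mul_mem_graded hs t.2
    by_cases hm : i + j = m
    · have hj : m - i = j := by omega
      rw [hj, eulerProj_of_mem_same A t.2, ← hm, eulerProj_of_mem_same A hst]
    · rw [eulerProj_of_mem_ne A hst hm, eulerProj_of_mem_ne A t.2 (by omega), mul_zero]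

lemma eulerProj_mul_gt {m i : ℕ} (him : m < i) {s : S} (hs : s ∈ A i) (t : S) :
    eulerProj A m (s * t) = 0 := by
  induction t using DirectSum.Decomposition.inductionOn A with
  | zero => simp
  | add a b ha hb => rw [mul_add, map_add, ha, hb, add_zero]
  | @homogeneous j t =>
    exact eulerProj_of_mem_ne A (SetLike.mul_mem_graded hs t.2) (by omega)

variable (P : Type*) [CommRing P] [Algebra K P]

/-- The degree-`i` projection (in the `S`-grading) on `S ⊗ P`. -/
noncomputable def eulerProjT (i : ℕ) : S ⊗[K] P →ₗ[K] S ⊗[K] P :=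
  (eulerProj A i).rTensor P

lemma eulerProjT_homog_mul_le {m i : ℕ} (him : i ≤ m) {s : S} (hs : s ∈ A i) (q : P)
    (x : S ⊗[K] P) :
    eulerProjT A P m ((s ⊗ₜ[K] q) * x) = (s ⊗ₜ[K] q) * eulerProjT A P (m - i) x := by
  have h : (eulerProjT A P m) ∘ₗ LinearMap.mulLeft K (s ⊗ₜ[K] q)
      = LinearMap.mulLeft K (s ⊗ₜ[K] q) ∘ₗ eulerProjT A P (m - i) := by
    apply TensorProduct.ext'
    intro t r
    simp only [LinearMap.coe_comp, Function.comp_apply, LinearMap.mulLeft_apply,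
      Algebra.TensorProduct.tmul_mul_tmul, eulerProjT, LinearMap.rTensor_tmul,
      eulerProj_mul_le A him hs]
  exact LinearMap.congr_fun h x

lemma eulerProjT_homog_mul_gt {m i : ℕ} (him : m < i) {s : S} (hs : s ∈ A i) (q : P)
    (x : S ⊗[K] P) :
    eulerProjT A P m ((s ⊗ₜ[K] q) * x) = 0 := by
  have h : (eulerProjT A P m) ∘ₗ LinearMap.mulLeft K (s ⊗ₜ[K] q) = 0 := by
    apply TensorProduct.ext'
    intro t r
    simp only [LinearMap.coe_comp, Function.comp_apply, LinearMap.mulLeft_apply,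
      Algebra.TensorProduct.tmul_mul_tmul, eulerProjT, LinearMap.rTensor_tmul,
      eulerProj_mul_gt A him hs, TensorProduct.zero_tmul, LinearMap.zero_apply]
  exact LinearMap.congr_fun h x

lemma eulerProjT_pos_mul {m : ℕ} {f x : S ⊗[K] P}
    (hf : f ∈ Submodule.span K {x : S ⊗[K] P |
        ∃ i : ℕ, 0 < i ∧ ∃ s ∈ A i, ∃ q : P, x = s ⊗ₜ[K] q})
    (hx : ∀ j < m, eulerProjT A P j x = 0) :
    eulerProjT A P m (f * x) = 0 := by
  induction hf using Submodule.span_induction with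
  | mem y hy =>
    obtain ⟨i, hi, s, hs, q, rfl⟩ := hy
    by_cases him : i ≤ m
    · rw [eulerProjT_homog_mul_le A P him hs, hx (m - i) (by omega), mul_zero]
    · exact eulerProjT_homog_mul_gt A P (by omega) hs q x
  | zero => rw [zero_mul, map_zero]
  | add a b _ _ ha hb => rw [add_mul, map_add, ha, hb, add_zero]
  | smul c a _ ha => rw [smul_mul_assoc, map_smul, ha, smul_zero]

lemma eulerProjT_all_zero {x : S ⊗[K] P} (h : ∀ i, eulerProjT A P i x = 0) : x = 0 := by
  classical
  set D := (DirectSum.decomposeLinearEquiv A).toLinearMap with hD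
  set w := D.rTensor P x with hw
  have hcomp : ∀ i, (DirectSum.component K ℕ (fun j => ↥(A j)) i).rTensor P w = 0 := by
    intro i
    apply Module.Flat.rTensor_preserves_injective_linearMap (M := P)
      ((A i).subtype) (A i).injective_subtype
    rw [map_zero, ← LinearMap.rTensor_comp_apply, ← LinearMap.rTensor_comp_apply]
    exact h i
  have key : ∀ i, (DirectSum.component K ℕ (fun j => ↥(A j) ⊗[K] P) i) ∘ₗ
      (TensorProduct.directSumLeft K K (fun j => ↥(A j)) P).toLinearMap
      = (DirectSum.component K ℕ (fun j => ↥(A j)) i).rTensor P := by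
    intro i
    apply TensorProduct.ext
    apply DirectSum.linearMap_ext
    intro j
    ext mj q
    simp only [LinearMap.coe_comp, Function.comp_apply, TensorProduct.mk_apply,
      LinearEquiv.coe_coe, TensorProduct.directSumLeft_tmul_lof, LinearMap.rTensor_tmul,
      LinearMap.compr₂_apply, LinearMap.compr₂ₛₗ_apply]
    by_cases hji : j = i
    · subst hji
      simp [DirectSum.component.lof_self]
    · rw [DirectSum.component.of, DirectSum.component.of, dif_neg hji, dif_neg hji,
        TensorProduct.zero_tmul]
  have hwz : TensorProduct.directSumLeft K K (fun j => ↥(A j)) P w = 0 := by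
    apply DirectSum.ext_component K
    intro i
    have h2 := LinearMap.congr_fun (key i) w
    simp only [LinearMap.coe_comp, Function.comp_apply, LinearEquiv.coe_coe] at h2
    rw [h2, hcomp i, map_zero]
  have hw0 : w = 0 := by
    have h3 := congrArg (TensorProduct.directSumLeft K K (fun j => ↥(A j)) P).symm hwz
    simpa using h3
  have hDinj : Function.Injective (D.rTensor P) :=
    Module.Flat.rTensor_preserves_injective_linearMap D
      (DirectSum.decomposeLinearEquiv A).injective
  apply hDinj
  rw [(D.rTensor P).map_zero, ← hw, hw0]

end Aux


/-- Algebraic core of injectivity of multiplication by the equivariant Euler class.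
Let `S` be a nonnegatively graded commutative `K`-algebra (grading `A`) whose
degree-zero part is a field, and `P = K[σ]` a polynomial ring over the field `K`
(generators in positive degree).  If `e ∈ R = S ⊗ P` is of the form
`e = 1 ⊗ p + (terms of positive degree in S)` with `p ≠ 0` homogeneous of degree `d`,
and `e` is homogeneous of total degree `d` (i.e. a sum of terms `s ⊗ q` with
`deg s + deg q = d`, `q` homogeneous), then `e` is not a zero divisor in `R`. -/
theorem euler_class_not_zero_divisor
    (K : Type*) [Field K] (S : Type*) [CommRing S] [Algebra K S]
    (A : ℕ → Submodule K S) [GradedAlgebra A]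
    (hS0field : ∀ x ∈ A 0, x ≠ 0 → ∃ y ∈ A 0, x * y = 1)
    (σ : Type*)
    (e : S ⊗[K] MvPolynomial σ K)
    (p : MvPolynomial σ K) (d : ℕ) (hp : p ≠ 0) (hphom : p.IsHomogeneous d)
    (hpos : e - (1 : S) ⊗ₜ[K] p ∈
      Submodule.span K {x : S ⊗[K] MvPolynomial σ K |
        ∃ i : ℕ, 0 < i ∧ ∃ s ∈ A i, ∃ q : MvPolynomial σ K, x = s ⊗ₜ[K] q})
    (hhom : e ∈ Submodule.span K {x : S ⊗[K] MvPolynomial σ K |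
        ∃ i j : ℕ, i + j = d ∧ ∃ s ∈ A i, ∃ q : MvPolynomial σ K,
          q.IsHomogeneous j ∧ x = s ⊗ₜ[K] q}) :
    ∀ x : S ⊗[K] MvPolynomial σ K, e * x = 0 → x = 0 := by
  classical
  intro x hx
  by_contra hx0
  let P := MvPolynomial σ K
  have hex : ∃ k, eulerProjT A P k x ≠ 0 := by
    by_contra hc
    push_neg at hc
    exact hx0 (eulerProjT_all_zero A P hc)
  set m := Nat.find hex with hm_def
  have hm : eulerProjT A P m x ≠ 0 := Nat.find_spec hex
  have hlt : ∀ j < m, eulerProjT A P j x = 0 := by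
    intro j hj
    simpa using Nat.find_min hex hj
  have he : e = (1 : S) ⊗ₜ[K] p + (e - (1 : S) ⊗ₜ[K] p) := by ring
  have hmain : ((1 : S) ⊗ₜ[K] p) * eulerProjT A P m x = 0 := by
    have h1 : eulerProjT A P m (e * x)
        = ((1 : S) ⊗ₜ[K] p) * eulerProjT A P m x := by
      rw [he, add_mul, map_add, eulerProjT_pos_mul A P hpos hlt, add_zero]
      have := eulerProjT_homog_mul_le A P (Nat.zero_le m)
        (SetLike.one_mem_graded A) p x
      simpa using this
    rw [hx, map_zero] at h1
    exact h1.symm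
  have hmul : (LinearMap.mulLeft K ((1 : S) ⊗ₜ[K] p) :
      S ⊗[K] P →ₗ[K] S ⊗[K] P) = LinearMap.lTensor S (LinearMap.mulLeft K p) := by
    apply TensorProduct.ext'
    intro s q
    simp [Algebra.TensorProduct.tmul_mul_tmul]
  have hinj : Function.Injective
      (LinearMap.mulLeft K ((1 : S) ⊗ₜ[K] p) : S ⊗[K] P →ₗ[K] S ⊗[K] P) := by
    rw [hmul]
    apply Module.Flat.lTensor_preserves_injective_linearMap
    intro a b hab
    simp only [LinearMap.mulLeft_apply] at hab
    exact mul_left_cancel₀ hp hab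
  apply hm
  have h0 : (LinearMap.mulLeft K ((1 : S) ⊗ₜ[K] p)) (eulerProjT A P m x)
      = (LinearMap.mulLeft K ((1 : S) ⊗ₜ[K] p)) 0 := by
    simp only [LinearMap.mulLeft_apply, mul_zero]
    exact hmain
  exact hinj h0
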